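/- arXiv:1011.0925 — 2 statements merged into one kernel-verified Lean document; each statement's English description precedes it below -/
import Mathlib

section
/- Define x(T) := ((1+i)/2)·((1+√3)·T + 2)/(T − 1 − √3). Let U ⊆ ℂ be open with T ≠ 1+√3, T·(T³−1)·(T³+8) ≠ 0 and x(T)⁸ + 14·x(T)⁴ + 1 ≠ 0, x(T) ≠ 0 for all T ∈ U. Let V ⊆ ℂ be open with x(U) ⊆ V, let ψ solve ψ''(x) = 48·(x⁵−x)²/(x⁸+14x⁴+1)²·ψ(x) on V, and let g : ℂ → ℂ be twice differentiable and nonvanishing on U with g(T)² = x'(T) for all T ∈ U. Then Φ(T) := ψ(x(T))/g(T) solves Φ''(T) = −(1/4)·(T⁶−20T³−8)²/(T²(T³+8)²(T³−1)²)·Φ(T) on U. -/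
set_option maxHeartbeats 2000000
set_option maxRecDepth 16000

open Complex

/-- `f` solves the equation `ψ'' = Q·ψ` on the open set `U`. -/
def SolvesOn (Q f : ℂ → ℂ) (U : Set ℂ) : Prop :=
  (∀ x ∈ U, DifferentiableAt ℂ f x) ∧ (∀ x ∈ U, DifferentiableAt ℂ (deriv f) x) ∧
    ∀ x ∈ U, deriv (deriv f) x = Q x * f x

/-- The Möbius change of Example 7 of the paper. -/
noncomputable def xMoebius (T : ℂ) : ℂ :=
  (1 + Complex.I) / 2 * ((1 + (Real.sqrt 3 : ℂ)) * T + 2) / (T - 1 - (Real.sqrt 3 : ℂ))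

lemma sq3C : ((Real.sqrt 3 : ℝ) : ℂ)^2 = 3 := by
  norm_cast
  rw [Real.sq_sqrt]
  norm_num

/-- The derivative constant of the Möbius map. -/
noncomputable def Kc : ℂ := -((1 + Complex.I)/2) * (6 + 2*(Real.sqrt 3 : ℂ))

lemma E1lem (T : ℂ) :
    (((1+Complex.I)/2*((1+(Real.sqrt 3:ℂ))*T+2))^5
        - ((1+Complex.I)/2*((1+(Real.sqrt 3:ℂ))*T+2))*(T-1-(Real.sqrt 3:ℂ))^4)*(T-1-(Real.sqrt 3:ℂ))
      = (-2*(1+Complex.I)*(3*(Real.sqrt 3:ℂ)+5))*(T^6-20*T^3-8) := by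
  linear_combination ((1/32)*T^6*(Real.sqrt 3:ℂ)^3*Complex.I^5 + (5/32)*T^6*(Real.sqrt 3:ℂ)^3*Complex.I^4 + (5/16)*T^6*(Real.sqrt 3:ℂ)^3*Complex.I^3 + (5/16)*T^6*(Real.sqrt 3:ℂ)^3*Complex.I^2 + (5/32)*T^6*(Real.sqrt 3:ℂ)^3*Complex.I + (1/32)*T^6*(Real.sqrt 3:ℂ)^3 + (5/32)*T^6*(Real.sqrt 3:ℂ)^2*Complex.I^5 + (25/32)*T^6*(Real.sqrt 3:ℂ)^2*Complex.I^4 + (25/16)*T^6*(Real.sqrt 3:ℂ)^2*Complex.I^3 + (25/16)*T^6*(Real.sqrt 3:ℂ)^2*Complex.I^2 + (25/32)*T^6*(Real.sqrt 3:ℂ)^2*Complex.I + (5/32)*T^6*(Real.sqrt 3:ℂ)^2 + (13/32)*T^6*(Real.sqrt 3:ℂ)*Complex.I^5 + (65/32)*T^6*(Real.sqrt 3:ℂ)*Complex.I^4 + (65/16)*T^6*(Real.sqrt 3:ℂ)*Complex.I^3 + (65/16)*T^6*(Real.sqrt 3:ℂ)*Complex.I^2 + (65/32)*T^6*(Real.sqrt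 3:ℂ)*Complex.I + (13/32)*T^6*(Real.sqrt 3:ℂ) + (25/32)*T^6*Complex.I^5 + (125/32)*T^6*Complex.I^4 + (125/16)*T^6*Complex.I^3 + (125/16)*T^6*Complex.I^2 + (125/32)*T^6*Complex.I + (25/32)*T^6 + (-1/32)*T^5*(Real.sqrt 3:ℂ)^4*Complex.I^5 + (-5/32)*T^5*(Real.sqrt 3:ℂ)^4*Complex.I^4 + (-5/16)*T^5*(Real.sqrt 3:ℂ)^4*Complex.I^3 + (-5/16)*T^5*(Real.sqrt 3:ℂ)^4*Complex.I^2 + (-5/32)*T^5*(Real.sqrt 3:ℂ)^4*Complex.I + (-1/32)*T^5*(Real.sqrt 3:ℂ)^4 + (-3/16)*T^5*(Real.sqrt 3:ℂ)^3*Complex.I^5 + (-15/16)*T^5*(Real.sqrt 3:ℂ)^3*Complex.I^4 + (-15/8)*T^5*(Real.sqrt 3:ℂ)^3*Complex.I^3 + (-15/8)*T^5*(Real.sqrt 3:ℂ)^3*Complex.I^2 + (-15/16)*T^5*(Real.sqrt 3:ℂ)^3*Complex.I + (-3/16)*T^5*(Real.sqrt 3:ℂ)^3 + (-1/4)*T^5*(Real.sqrt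 3:ℂ)^2*Complex.I^5 + (-5/4)*T^5*(Real.sqrt 3:ℂ)^2*Complex.I^4 + (-5/2)*T^5*(Real.sqrt 3:ℂ)^2*Complex.I^3 + (-5/2)*T^5*(Real.sqrt 3:ℂ)^2*Complex.I^2 + (-5/4)*T^5*(Real.sqrt 3:ℂ)^2*Complex.I + (-1/4)*T^5*(Real.sqrt 3:ℂ)^2 + (1/16)*T^5*(Real.sqrt 3:ℂ)*Complex.I^5 + (5/16)*T^5*(Real.sqrt 3:ℂ)*Complex.I^4 + (5/8)*T^5*(Real.sqrt 3:ℂ)*Complex.I^3 + (5/8)*T^5*(Real.sqrt 3:ℂ)*Complex.I^2 + (5/16)*T^5*(Real.sqrt 3:ℂ)*Complex.I + (1/16)*T^5*(Real.sqrt 3:ℂ) + (21/32)*T^5*Complex.I^5 + (105/32)*T^5*Complex.I^4 + (105/16)*T^5*Complex.I^3 + (105/16)*T^5*Complex.I^2 + (185/32)*T^5*Complex.I + (101/32)*T^5 + (-5/16)*T^4*(Real.sqrt 3:ℂ)^3*Complex.I^5 + (-25/16)*T^4*(Real.sqrt 3:ℂ)^3*Complex.I^4 + (-25/8)*T^4*(Real.sqrt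 3:ℂ)^3*Complex.I^3 + (-25/8)*T^4*(Real.sqrt 3:ℂ)^3*Complex.I^2 + (-25/16)*T^4*(Real.sqrt 3:ℂ)^3*Complex.I + (-5/16)*T^4*(Real.sqrt 3:ℂ)^3 + (-25/16)*T^4*(Real.sqrt 3:ℂ)^2*Complex.I^5 + (-125/16)*T^4*(Real.sqrt 3:ℂ)^2*Complex.I^4 + (-125/8)*T^4*(Real.sqrt 3:ℂ)^2*Complex.I^3 + (-125/8)*T^4*(Real.sqrt 3:ℂ)^2*Complex.I^2 + (-125/16)*T^4*(Real.sqrt 3:ℂ)^2*Complex.I + (-25/16)*T^4*(Real.sqrt 3:ℂ)^2 + (-45/16)*T^4*(Real.sqrt 3:ℂ)*Complex.I^5 + (-225/16)*T^4*(Real.sqrt 3:ℂ)*Complex.I^4 + (-225/8)*T^4*(Real.sqrt 3:ℂ)*Complex.I^3 + (-225/8)*T^4*(Real.sqrt 3:ℂ)*Complex.I^2 + (-305/16)*T^4*(Real.sqrt 3:ℂ)*Complex.I + (-125/16)*T^4*(Real.sqrt 3:ℂ) + (-65/16)*T^4*Complex.I^5 + (-325/16)*T^4*Complex.I^4 + (-325/8)*T^4*Complex.I^3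 + (-325/8)*T^4*Complex.I^2 + (-565/16)*T^4*Complex.I + (-305/16)*T^4 + (-5/4)*T^3*(Real.sqrt 3:ℂ)^2*Complex.I^5 + (-25/4)*T^3*(Real.sqrt 3:ℂ)^2*Complex.I^4 + (-25/2)*T^3*(Real.sqrt 3:ℂ)^2*Complex.I^3 + (-25/2)*T^3*(Real.sqrt 3:ℂ)^2*Complex.I^2 + (-5/4)*T^3*(Real.sqrt 3:ℂ)^2*Complex.I + (15/4)*T^3*(Real.sqrt 3:ℂ)^2 + (-5)*T^3*(Real.sqrt 3:ℂ)*Complex.I^5 + (-25)*T^3*(Real.sqrt 3:ℂ)*Complex.I^4 + (-50)*T^3*(Real.sqrt 3:ℂ)*Complex.I^3 + (-50)*T^3*(Real.sqrt 3:ℂ)*Complex.I^2 + (-5)*T^3*(Real.sqrt 3:ℂ)*Complex.I + (15)*T^3*(Real.sqrt 3:ℂ) + (-35/4)*T^3*Complex.I^5 + (-175/4)*T^3*Complex.I^4 + (-175/2)*T^3*Complex.I^3 + (-175/2)*T^3*Complex.I^2 + (-35/4)*T^3*Complex.I + (105/4)*T^3 + (-5/2)*T^2*(Real.sqrt 3:ℂ)^3*Complex.I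 + (-5/2)*T^2*(Real.sqrt 3:ℂ)^3 + (-25/2)*T^2*(Real.sqrt 3:ℂ)^2*Complex.I + (-25/2)*T^2*(Real.sqrt 3:ℂ)^2 + (-5/2)*T^2*(Real.sqrt 3:ℂ)*Complex.I^5 + (-25/2)*T^2*(Real.sqrt 3:ℂ)*Complex.I^4 + (-25)*T^2*(Real.sqrt 3:ℂ)*Complex.I^3 + (-25)*T^2*(Real.sqrt 3:ℂ)*Complex.I^2 + (-35)*T^2*(Real.sqrt 3:ℂ)*Complex.I + (-25)*T^2*(Real.sqrt 3:ℂ) + (-15/2)*T^2*Complex.I^5 + (-75/2)*T^2*Complex.I^4 + (-75)*T^2*Complex.I^3 + (-75)*T^2*Complex.I^2 + (-70)*T^2*Complex.I + (-40)*T^2 + (1/2)*T*(Real.sqrt 3:ℂ)^4*Complex.I + (1/2)*T*(Real.sqrt 3:ℂ)^4 + (3)*T*(Real.sqrt 3:ℂ)^3*Complex.I + (3)*T*(Real.sqrt 3:ℂ)^3 + (4)*T*(Real.sqrt 3:ℂ)^2*Complex.I + (4)*T*(Real.sqrt 3:ℂ)^2 + (-1)*T*(Real.sqrt 3:ℂ)*Complex.I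 + (-1)*T*(Real.sqrt 3:ℂ) + (-5/2)*T*Complex.I^5 + (-25/2)*T*Complex.I^4 + (-25)*T*Complex.I^3 + (-25)*T*Complex.I^2 + (-23)*T*Complex.I + (-13)*T + (1)*(Real.sqrt 3:ℂ)^3*Complex.I + (1)*(Real.sqrt 3:ℂ)^3 + (5)*(Real.sqrt 3:ℂ)^2*Complex.I + (5)*(Real.sqrt 3:ℂ)^2 + (13)*(Real.sqrt 3:ℂ)*Complex.I + (13)*(Real.sqrt 3:ℂ) + (25)*Complex.I + (25)) * sq3C + ((11/8)*T^6*(Real.sqrt 3:ℂ)*Complex.I^3 + (55/8)*T^6*(Real.sqrt 3:ℂ)*Complex.I^2 + (99/8)*T^6*(Real.sqrt 3:ℂ)*Complex.I + (55/8)*T^6*(Real.sqrt 3:ℂ) + (19/8)*T^6*Complex.I^3 + (95/8)*T^6*Complex.I^2 + (171/8)*T^6*Complex.I + (95/8)*T^6 + (5/4)*T^5*(Real.sqrt 3:ℂ)*Complex.I^3 + (25/4)*T^5*(Real.sqrt 3:ℂ)*Complex.I^2 + (45/4)*T^5*(Real.sqrt 3:ℂ)*Complex.I + (25/4)*T^5*(Real.sqrt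 3:ℂ) + (9/4)*T^5*Complex.I^3 + (45/4)*T^5*Complex.I^2 + (81/4)*T^5*Complex.I + (45/4)*T^5 + (-25/4)*T^4*(Real.sqrt 3:ℂ)*Complex.I^3 + (-125/4)*T^4*(Real.sqrt 3:ℂ)*Complex.I^2 + (-225/4)*T^4*(Real.sqrt 3:ℂ)*Complex.I + (-125/4)*T^4*(Real.sqrt 3:ℂ) + (-45/4)*T^4*Complex.I^3 + (-225/4)*T^4*Complex.I^2 + (-405/4)*T^4*Complex.I + (-225/4)*T^4 + (-15)*T^3*(Real.sqrt 3:ℂ)*Complex.I^3 + (-75)*T^3*(Real.sqrt 3:ℂ)*Complex.I^2 + (-135)*T^3*(Real.sqrt 3:ℂ)*Complex.I + (-75)*T^3*(Real.sqrt 3:ℂ) + (-25)*T^3*Complex.I^3 + (-125)*T^3*Complex.I^2 + (-225)*T^3*Complex.I + (-125)*T^3 + (-25/2)*T^2*(Real.sqrt 3:ℂ)*Complex.I^3 + (-125/2)*T^2*(Real.sqrt 3:ℂ)*Complex.I^2 + (-225/2)*T^2*(Real.sqrt 3:ℂ)*Complex.I + (-125/2)*T^2*(Real.sqrt 3:ℂ)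 + (-45/2)*T^2*Complex.I^3 + (-225/2)*T^2*Complex.I^2 + (-405/2)*T^2*Complex.I + (-225/2)*T^2 + (-5)*T*(Real.sqrt 3:ℂ)*Complex.I^3 + (-25)*T*(Real.sqrt 3:ℂ)*Complex.I^2 + (-45)*T*(Real.sqrt 3:ℂ)*Complex.I + (-25)*T*(Real.sqrt 3:ℂ) + (-9)*T*Complex.I^3 + (-45)*T*Complex.I^2 + (-81)*T*Complex.I + (-45)*T + (-1)*(Real.sqrt 3:ℂ)*Complex.I^3 + (-5)*(Real.sqrt 3:ℂ)*Complex.I^2 + (-9)*(Real.sqrt 3:ℂ)*Complex.I + (-5)*(Real.sqrt 3:ℂ) + (-1)*Complex.I^3 + (-5)*Complex.I^2 + (-9)*Complex.I + (-5)) * Complex.I_sq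

lemma E2lem (T : ℂ) :
    ((1+Complex.I)/2*((1+(Real.sqrt 3:ℂ))*T+2))^8
        + 14*((1+Complex.I)/2*((1+(Real.sqrt 3:ℂ))*T+2))^4*(T-1-(Real.sqrt 3:ℂ))^4
        + (T-1-(Real.sqrt 3:ℂ))^8
      = (768*(Real.sqrt 3:ℂ)+1344)*(T*(T^3-1)*(T^3+8)) := by
  linear_combination ((1/256)*T^8*(Real.sqrt 3:ℂ)^6*Complex.I^8 + (1/32)*T^8*(Real.sqrt 3:ℂ)^6*Complex.I^7 + (7/64)*T^8*(Real.sqrt 3:ℂ)^6*Complex.I^6 + (7/32)*T^8*(Real.sqrt 3:ℂ)^6*Complex.I^5 + (35/128)*T^8*(Real.sqrt 3:ℂ)^6*Complex.I^4 + (7/32)*T^8*(Real.sqrt 3:ℂ)^6*Complex.I^3 + (7/64)*T^8*(Real.sqrt 3:ℂ)^6*Complex.I^2 + (1/32)*T^8*(Real.sqrt 3:ℂ)^6*Complex.I + (1/256)*T^8*(Real.sqrt 3:ℂ)^6 + (1/32)*T^8*(Real.sqrt 3:ℂ)^5*Complex.I^8 + (1/4)*T^8*(Real.sqrt 3:ℂ)^5*Complex.I^7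 + (7/8)*T^8*(Real.sqrt 3:ℂ)^5*Complex.I^6 + (7/4)*T^8*(Real.sqrt 3:ℂ)^5*Complex.I^5 + (35/16)*T^8*(Real.sqrt 3:ℂ)^5*Complex.I^4 + (7/4)*T^8*(Real.sqrt 3:ℂ)^5*Complex.I^3 + (7/8)*T^8*(Real.sqrt 3:ℂ)^5*Complex.I^2 + (1/4)*T^8*(Real.sqrt 3:ℂ)^5*Complex.I + (1/32)*T^8*(Real.sqrt 3:ℂ)^5 + (31/256)*T^8*(Real.sqrt 3:ℂ)^4*Complex.I^8 + (31/32)*T^8*(Real.sqrt 3:ℂ)^4*Complex.I^7 + (217/64)*T^8*(Real.sqrt 3:ℂ)^4*Complex.I^6 + (217/32)*T^8*(Real.sqrt 3:ℂ)^4*Complex.I^5 + (1085/128)*T^8*(Real.sqrt 3:ℂ)^4*Complex.I^4 + (217/32)*T^8*(Real.sqrt 3:ℂ)^4*Complex.I^3 + (217/64)*T^8*(Real.sqrt 3:ℂ)^4*Complex.I^2 + (31/32)*T^8*(Real.sqrt 3:ℂ)^4*Complex.I + (31/256)*T^8*(Real.sqrt 3:ℂ)^4 + (5/16)*T^8*(Real.sqrt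 3:ℂ)^3*Complex.I^8 + (5/2)*T^8*(Real.sqrt 3:ℂ)^3*Complex.I^7 + (35/4)*T^8*(Real.sqrt 3:ℂ)^3*Complex.I^6 + (35/2)*T^8*(Real.sqrt 3:ℂ)^3*Complex.I^5 + (175/8)*T^8*(Real.sqrt 3:ℂ)^3*Complex.I^4 + (35/2)*T^8*(Real.sqrt 3:ℂ)^3*Complex.I^3 + (35/4)*T^8*(Real.sqrt 3:ℂ)^3*Complex.I^2 + (5/2)*T^8*(Real.sqrt 3:ℂ)^3*Complex.I + (5/16)*T^8*(Real.sqrt 3:ℂ)^3 + (163/256)*T^8*(Real.sqrt 3:ℂ)^2*Complex.I^8 + (163/32)*T^8*(Real.sqrt 3:ℂ)^2*Complex.I^7 + (1141/64)*T^8*(Real.sqrt 3:ℂ)^2*Complex.I^6 + (1141/32)*T^8*(Real.sqrt 3:ℂ)^2*Complex.I^5 + (5817/128)*T^8*(Real.sqrt 3:ℂ)^2*Complex.I^4 + (1253/32)*T^8*(Real.sqrt 3:ℂ)^2*Complex.I^3 + (1477/64)*T^8*(Real.sqrt 3:ℂ)^2*Complex.I^2 + (275/32)*T^8*(Real.sqrt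 3:ℂ)^2*Complex.I + (387/256)*T^8*(Real.sqrt 3:ℂ)^2 + (37/32)*T^8*(Real.sqrt 3:ℂ)*Complex.I^8 + (37/4)*T^8*(Real.sqrt 3:ℂ)*Complex.I^7 + (259/8)*T^8*(Real.sqrt 3:ℂ)*Complex.I^6 + (259/4)*T^8*(Real.sqrt 3:ℂ)*Complex.I^5 + (1351/16)*T^8*(Real.sqrt 3:ℂ)*Complex.I^4 + (315/4)*T^8*(Real.sqrt 3:ℂ)*Complex.I^3 + (427/8)*T^8*(Real.sqrt 3:ℂ)*Complex.I^2 + (93/4)*T^8*(Real.sqrt 3:ℂ)*Complex.I + (149/32)*T^8*(Real.sqrt 3:ℂ) + (517/256)*T^8*Complex.I^8 + (517/32)*T^8*Complex.I^7 + (3619/64)*T^8*Complex.I^6 + (3619/32)*T^8*Complex.I^5 + (19103/128)*T^8*Complex.I^4 + (4627/32)*T^8*Complex.I^3 + (6643/64)*T^8*Complex.I^2 + (1525/32)*T^8*Complex.I + (2533/256)*T^8 + (1/16)*T^7*(Real.sqrt 3:ℂ)^5*Complex.I^8 + (1/2)*T^7*(Real.sqrt 3:ℂ)^5*Complex.I^7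 + (7/4)*T^7*(Real.sqrt 3:ℂ)^5*Complex.I^6 + (7/2)*T^7*(Real.sqrt 3:ℂ)^5*Complex.I^5 + (35/8)*T^7*(Real.sqrt 3:ℂ)^5*Complex.I^4 + (7/2)*T^7*(Real.sqrt 3:ℂ)^5*Complex.I^3 + (7/4)*T^7*(Real.sqrt 3:ℂ)^5*Complex.I^2 + (1/2)*T^7*(Real.sqrt 3:ℂ)^5*Complex.I + (1/16)*T^7*(Real.sqrt 3:ℂ)^5 + (7/16)*T^7*(Real.sqrt 3:ℂ)^4*Complex.I^8 + (7/2)*T^7*(Real.sqrt 3:ℂ)^4*Complex.I^7 + (49/4)*T^7*(Real.sqrt 3:ℂ)^4*Complex.I^6 + (49/2)*T^7*(Real.sqrt 3:ℂ)^4*Complex.I^5 + (245/8)*T^7*(Real.sqrt 3:ℂ)^4*Complex.I^4 + (49/2)*T^7*(Real.sqrt 3:ℂ)^4*Complex.I^3 + (49/4)*T^7*(Real.sqrt 3:ℂ)^4*Complex.I^2 + (7/2)*T^7*(Real.sqrt 3:ℂ)^4*Complex.I + (7/16)*T^7*(Real.sqrt 3:ℂ)^4 + (3/2)*T^7*(Real.sqrt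 3:ℂ)^3*Complex.I^8 + (12)*T^7*(Real.sqrt 3:ℂ)^3*Complex.I^7 + (42)*T^7*(Real.sqrt 3:ℂ)^3*Complex.I^6 + (84)*T^7*(Real.sqrt 3:ℂ)^3*Complex.I^5 + (203/2)*T^7*(Real.sqrt 3:ℂ)^3*Complex.I^4 + (70)*T^7*(Real.sqrt 3:ℂ)^3*Complex.I^3 + (21)*T^7*(Real.sqrt 3:ℂ)^3*Complex.I^2 + (-2)*T^7*(Real.sqrt 3:ℂ)^3*Complex.I + (-2)*T^7*(Real.sqrt 3:ℂ)^3 + (7/2)*T^7*(Real.sqrt 3:ℂ)^2*Complex.I^8 + (28)*T^7*(Real.sqrt 3:ℂ)^2*Complex.I^7 + (98)*T^7*(Real.sqrt 3:ℂ)^2*Complex.I^6 + (196)*T^7*(Real.sqrt 3:ℂ)^2*Complex.I^5 + (455/2)*T^7*(Real.sqrt 3:ℂ)^2*Complex.I^4 + (126)*T^7*(Real.sqrt 3:ℂ)^2*Complex.I^3 + (-7)*T^7*(Real.sqrt 3:ℂ)^2*Complex.I^2 + (-42)*T^7*(Real.sqrt 3:ℂ)^2*Complex.I + (-14)*T^7*(Real.sqrt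 3:ℂ)^2 + (107/16)*T^7*(Real.sqrt 3:ℂ)*Complex.I^8 + (107/2)*T^7*(Real.sqrt 3:ℂ)*Complex.I^7 + (749/4)*T^7*(Real.sqrt 3:ℂ)*Complex.I^6 + (749/2)*T^7*(Real.sqrt 3:ℂ)*Complex.I^5 + (3437/8)*T^7*(Real.sqrt 3:ℂ)*Complex.I^4 + (441/2)*T^7*(Real.sqrt 3:ℂ)*Complex.I^3 + (-175/4)*T^7*(Real.sqrt 3:ℂ)*Complex.I^2 + (-201/2)*T^7*(Real.sqrt 3:ℂ)*Complex.I + (-509/16)*T^7*(Real.sqrt 3:ℂ) + (189/16)*T^7*Complex.I^8 + (189/2)*T^7*Complex.I^7 + (1323/4)*T^7*Complex.I^6 + (1323/2)*T^7*Complex.I^5 + (6083/8)*T^7*Complex.I^4 + (791/2)*T^7*Complex.I^3 + (-273/4)*T^7*Complex.I^2 + (-343/2)*T^7*Complex.I + (-875/16)*T^7 + (7/16)*T^6*(Real.sqrt 3:ℂ)^4*Complex.I^8 + (7/2)*T^6*(Real.sqrt 3:ℂ)^4*Complex.I^7 + (49/4)*T^6*(Real.sqrt 3:ℂ)^4*Complex.I^6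 + (49/2)*T^6*(Real.sqrt 3:ℂ)^4*Complex.I^5 + (287/8)*T^6*(Real.sqrt 3:ℂ)^4*Complex.I^4 + (91/2)*T^6*(Real.sqrt 3:ℂ)^4*Complex.I^3 + (175/4)*T^6*(Real.sqrt 3:ℂ)^4*Complex.I^2 + (49/2)*T^6*(Real.sqrt 3:ℂ)^4*Complex.I + (91/16)*T^6*(Real.sqrt 3:ℂ)^4 + (21/8)*T^6*(Real.sqrt 3:ℂ)^3*Complex.I^8 + (21)*T^6*(Real.sqrt 3:ℂ)^3*Complex.I^7 + (147/2)*T^6*(Real.sqrt 3:ℂ)^3*Complex.I^6 + (147)*T^6*(Real.sqrt 3:ℂ)^3*Complex.I^5 + (861/4)*T^6*(Real.sqrt 3:ℂ)^3*Complex.I^4 + (273)*T^6*(Real.sqrt 3:ℂ)^3*Complex.I^3 + (525/2)*T^6*(Real.sqrt 3:ℂ)^3*Complex.I^2 + (147)*T^6*(Real.sqrt 3:ℂ)^3*Complex.I + (273/8)*T^6*(Real.sqrt 3:ℂ)^3 + (63/8)*T^6*(Real.sqrt 3:ℂ)^2*Complex.I^8 + (63)*T^6*(Real.sqrt 3:ℂ)^2*Complex.I^7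 + (441/2)*T^6*(Real.sqrt 3:ℂ)^2*Complex.I^6 + (441)*T^6*(Real.sqrt 3:ℂ)^2*Complex.I^5 + (2471/4)*T^6*(Real.sqrt 3:ℂ)^2*Complex.I^4 + (707)*T^6*(Real.sqrt 3:ℂ)^2*Complex.I^3 + (1239/2)*T^6*(Real.sqrt 3:ℂ)^2*Complex.I^2 + (329)*T^6*(Real.sqrt 3:ℂ)^2*Complex.I + (595/8)*T^6*(Real.sqrt 3:ℂ)^2 + (133/8)*T^6*(Real.sqrt 3:ℂ)*Complex.I^8 + (133)*T^6*(Real.sqrt 3:ℂ)*Complex.I^7 + (931/2)*T^6*(Real.sqrt 3:ℂ)*Complex.I^6 + (931)*T^6*(Real.sqrt 3:ℂ)*Complex.I^5 + (5005/4)*T^6*(Real.sqrt 3:ℂ)*Complex.I^4 + (1281)*T^6*(Real.sqrt 3:ℂ)*Complex.I^3 + (1981/2)*T^6*(Real.sqrt 3:ℂ)*Complex.I^2 + (483)*T^6*(Real.sqrt 3:ℂ)*Complex.I + (833/8)*T^6*(Real.sqrt 3:ℂ) + (483/16)*T^6*Complex.I^8 + (483/2)*T^6*Complex.I^7 + (3381/4)*T^6*Complex.I^6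 + (3381/2)*T^6*Complex.I^5 + (17955/8)*T^6*Complex.I^4 + (4431/2)*T^6*Complex.I^3 + (6531/4)*T^6*Complex.I^2 + (1533/2)*T^6*Complex.I + (3031/16)*T^6 + (-7/2)*T^5*(Real.sqrt 3:ℂ)^5*Complex.I^4 + (-14)*T^5*(Real.sqrt 3:ℂ)^5*Complex.I^3 + (-21)*T^5*(Real.sqrt 3:ℂ)^5*Complex.I^2 + (-14)*T^5*(Real.sqrt 3:ℂ)^5*Complex.I + (-7/2)*T^5*(Real.sqrt 3:ℂ)^5 + (-49/2)*T^5*(Real.sqrt 3:ℂ)^4*Complex.I^4 + (-98)*T^5*(Real.sqrt 3:ℂ)^4*Complex.I^3 + (-147)*T^5*(Real.sqrt 3:ℂ)^4*Complex.I^2 + (-98)*T^5*(Real.sqrt 3:ℂ)^4*Complex.I + (-49/2)*T^5*(Real.sqrt 3:ℂ)^4 + (7/4)*T^5*(Real.sqrt 3:ℂ)^3*Complex.I^8 + (14)*T^5*(Real.sqrt 3:ℂ)^3*Complex.I^7 + (49)*T^5*(Real.sqrt 3:ℂ)^3*Complex.I^6 + (98)*T^5*(Real.sqrt 3:ℂ)^3*Complex.I^5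 + (161/2)*T^5*(Real.sqrt 3:ℂ)^3*Complex.I^4 + (-70)*T^5*(Real.sqrt 3:ℂ)^3*Complex.I^3 + (-203)*T^5*(Real.sqrt 3:ℂ)^3*Complex.I^2 + (-154)*T^5*(Real.sqrt 3:ℂ)^3*Complex.I + (-161/4)*T^5*(Real.sqrt 3:ℂ)^3 + (35/4)*T^5*(Real.sqrt 3:ℂ)^2*Complex.I^8 + (70)*T^5*(Real.sqrt 3:ℂ)^2*Complex.I^7 + (245)*T^5*(Real.sqrt 3:ℂ)^2*Complex.I^6 + (490)*T^5*(Real.sqrt 3:ℂ)^2*Complex.I^5 + (1253/2)*T^5*(Real.sqrt 3:ℂ)^2*Complex.I^4 + (546)*T^5*(Real.sqrt 3:ℂ)^2*Complex.I^3 + (329)*T^5*(Real.sqrt 3:ℂ)^2*Complex.I^2 + (126)*T^5*(Real.sqrt 3:ℂ)^2*Complex.I + (91/4)*T^5*(Real.sqrt 3:ℂ)^2 + (91/4)*T^5*(Real.sqrt 3:ℂ)*Complex.I^8 + (182)*T^5*(Real.sqrt 3:ℂ)*Complex.I^7 + (637)*T^5*(Real.sqrt 3:ℂ)*Complex.I^6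 + (1274)*T^5*(Real.sqrt 3:ℂ)*Complex.I^5 + (1680)*T^5*(Real.sqrt 3:ℂ)*Complex.I^4 + (1624)*T^5*(Real.sqrt 3:ℂ)*Complex.I^3 + (1162)*T^5*(Real.sqrt 3:ℂ)*Complex.I^2 + (532)*T^5*(Real.sqrt 3:ℂ)*Complex.I + (217/4)*T^5*(Real.sqrt 3:ℂ) + (175/4)*T^5*Complex.I^8 + (350)*T^5*Complex.I^7 + (1225)*T^5*Complex.I^6 + (2450)*T^5*Complex.I^5 + (3199)*T^5*Complex.I^4 + (2996)*T^5*Complex.I^3 + (2044)*T^5*Complex.I^2 + (896)*T^5*Complex.I + (49/4)*T^5 + (7/8)*T^4*(Real.sqrt 3:ℂ)^6*Complex.I^4 + (7/2)*T^4*(Real.sqrt 3:ℂ)^6*Complex.I^3 + (21/4)*T^4*(Real.sqrt 3:ℂ)^6*Complex.I^2 + (7/2)*T^4*(Real.sqrt 3:ℂ)^6*Complex.I + (7/8)*T^4*(Real.sqrt 3:ℂ)^6 + (7)*T^4*(Real.sqrt 3:ℂ)^5*Complex.I^4 + (28)*T^4*(Real.sqrt 3:ℂ)^5*Complex.I^3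 + (42)*T^4*(Real.sqrt 3:ℂ)^5*Complex.I^2 + (28)*T^4*(Real.sqrt 3:ℂ)^5*Complex.I + (7)*T^4*(Real.sqrt 3:ℂ)^5 + (-7/8)*T^4*(Real.sqrt 3:ℂ)^4*Complex.I^4 + (-7/2)*T^4*(Real.sqrt 3:ℂ)^4*Complex.I^3 + (-21/4)*T^4*(Real.sqrt 3:ℂ)^4*Complex.I^2 + (-7/2)*T^4*(Real.sqrt 3:ℂ)^4*Complex.I + (-7/8)*T^4*(Real.sqrt 3:ℂ)^4 + (-98)*T^4*(Real.sqrt 3:ℂ)^3*Complex.I^4 + (-392)*T^4*(Real.sqrt 3:ℂ)^3*Complex.I^3 + (-588)*T^4*(Real.sqrt 3:ℂ)^3*Complex.I^2 + (-392)*T^4*(Real.sqrt 3:ℂ)^3*Complex.I + (-98)*T^4*(Real.sqrt 3:ℂ)^3 + (35/8)*T^4*(Real.sqrt 3:ℂ)^2*Complex.I^8 + (35)*T^4*(Real.sqrt 3:ℂ)^2*Complex.I^7 + (245/2)*T^4*(Real.sqrt 3:ℂ)^2*Complex.I^6 + (245)*T^4*(Real.sqrt 3:ℂ)^2*Complex.I^5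 + (567/8)*T^4*(Real.sqrt 3:ℂ)^2*Complex.I^4 + (-1393/2)*T^4*(Real.sqrt 3:ℂ)^2*Complex.I^3 + (-5159/4)*T^4*(Real.sqrt 3:ℂ)^2*Complex.I^2 + (-1813/2)*T^4*(Real.sqrt 3:ℂ)^2*Complex.I + (-161)*T^4*(Real.sqrt 3:ℂ)^2 + (35/2)*T^4*(Real.sqrt 3:ℂ)*Complex.I^8 + (140)*T^4*(Real.sqrt 3:ℂ)*Complex.I^7 + (490)*T^4*(Real.sqrt 3:ℂ)*Complex.I^6 + (980)*T^4*(Real.sqrt 3:ℂ)*Complex.I^5 + (924)*T^4*(Real.sqrt 3:ℂ)*Complex.I^4 + (-224)*T^4*(Real.sqrt 3:ℂ)*Complex.I^3 + (-1316)*T^4*(Real.sqrt 3:ℂ)*Complex.I^2 + (-1064)*T^4*(Real.sqrt 3:ℂ)*Complex.I + (-7/2)*T^4*(Real.sqrt 3:ℂ) + (315/8)*T^4*Complex.I^8 + (315)*T^4*Complex.I^7 + (2205/2)*T^4*Complex.I^6 + (2205)*T^4*Complex.I^5 + (18389/8)*T^4*Complex.I^4 + (749/2)*T^4*Complex.I^3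 + (-6573/4)*T^4*Complex.I^2 + (-3031/2)*T^4*Complex.I + (847/4)*T^4 + (7)*T^3*(Real.sqrt 3:ℂ)^5*Complex.I^4 + (28)*T^3*(Real.sqrt 3:ℂ)^5*Complex.I^3 + (42)*T^3*(Real.sqrt 3:ℂ)^5*Complex.I^2 + (28)*T^3*(Real.sqrt 3:ℂ)^5*Complex.I + (7)*T^3*(Real.sqrt 3:ℂ)^5 + (49)*T^3*(Real.sqrt 3:ℂ)^4*Complex.I^4 + (196)*T^3*(Real.sqrt 3:ℂ)^4*Complex.I^3 + (294)*T^3*(Real.sqrt 3:ℂ)^4*Complex.I^2 + (196)*T^3*(Real.sqrt 3:ℂ)^4*Complex.I + (49)*T^3*(Real.sqrt 3:ℂ)^4 + (84)*T^3*(Real.sqrt 3:ℂ)^3*Complex.I^4 + (336)*T^3*(Real.sqrt 3:ℂ)^3*Complex.I^3 + (504)*T^3*(Real.sqrt 3:ℂ)^3*Complex.I^2 + (336)*T^3*(Real.sqrt 3:ℂ)^3*Complex.I + (28)*T^3*(Real.sqrt 3:ℂ)^3 + (-28)*T^3*(Real.sqrt 3:ℂ)^2*Complex.I^4 + (-112)*T^3*(Real.sqrt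 3:ℂ)^2*Complex.I^3 + (-168)*T^3*(Real.sqrt 3:ℂ)^2*Complex.I^2 + (-112)*T^3*(Real.sqrt 3:ℂ)^2*Complex.I + (-308)*T^3*(Real.sqrt 3:ℂ)^2 + (7)*T^3*(Real.sqrt 3:ℂ)*Complex.I^8 + (56)*T^3*(Real.sqrt 3:ℂ)*Complex.I^7 + (196)*T^3*(Real.sqrt 3:ℂ)*Complex.I^6 + (392)*T^3*(Real.sqrt 3:ℂ)*Complex.I^5 + (315)*T^3*(Real.sqrt 3:ℂ)*Complex.I^4 + (-308)*T^3*(Real.sqrt 3:ℂ)*Complex.I^3 + (-854)*T^3*(Real.sqrt 3:ℂ)*Complex.I^2 + (-644)*T^3*(Real.sqrt 3:ℂ)*Complex.I + (-896)*T^3*(Real.sqrt 3:ℂ) + (21)*T^3*Complex.I^8 + (168)*T^3*Complex.I^7 + (588)*T^3*Complex.I^6 + (1176)*T^3*Complex.I^5 + (1197)*T^3*Complex.I^4 + (84)*T^3*Complex.I^3 + (-1050)*T^3*Complex.I^2 + (-924)*T^3*Complex.I + (-1652)*T^3 + (21)*T^2*(Real.sqrt 3:ℂ)^4*Complex.I^4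 + (84)*T^2*(Real.sqrt 3:ℂ)^4*Complex.I^3 + (126)*T^2*(Real.sqrt 3:ℂ)^4*Complex.I^2 + (84)*T^2*(Real.sqrt 3:ℂ)^4*Complex.I + (49)*T^2*(Real.sqrt 3:ℂ)^4 + (126)*T^2*(Real.sqrt 3:ℂ)^3*Complex.I^4 + (504)*T^2*(Real.sqrt 3:ℂ)^3*Complex.I^3 + (756)*T^2*(Real.sqrt 3:ℂ)^3*Complex.I^2 + (504)*T^2*(Real.sqrt 3:ℂ)^3*Complex.I + (294)*T^2*(Real.sqrt 3:ℂ)^3 + (266)*T^2*(Real.sqrt 3:ℂ)^2*Complex.I^4 + (1064)*T^2*(Real.sqrt 3:ℂ)^2*Complex.I^3 + (1596)*T^2*(Real.sqrt 3:ℂ)^2*Complex.I^2 + (1064)*T^2*(Real.sqrt 3:ℂ)^2*Complex.I + (770)*T^2*(Real.sqrt 3:ℂ)^2 + (350)*T^2*(Real.sqrt 3:ℂ)*Complex.I^4 + (1400)*T^2*(Real.sqrt 3:ℂ)*Complex.I^3 + (2100)*T^2*(Real.sqrt 3:ℂ)*Complex.I^2 + (1400)*T^2*(Real.sqrt 3:ℂ)*Complex.I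 + (1414)*T^2*(Real.sqrt 3:ℂ) + (7)*T^2*Complex.I^8 + (56)*T^2*Complex.I^7 + (196)*T^2*Complex.I^6 + (392)*T^2*Complex.I^5 + (1015)*T^2*Complex.I^4 + (2492)*T^2*Complex.I^3 + (3346)*T^2*Complex.I^2 + (2156)*T^2*Complex.I + (2464)*T^2 + (-8)*T*(Real.sqrt 3:ℂ)^5 + (-56)*T*(Real.sqrt 3:ℂ)^4 + (28)*T*(Real.sqrt 3:ℂ)^3*Complex.I^4 + (112)*T*(Real.sqrt 3:ℂ)^3*Complex.I^3 + (168)*T*(Real.sqrt 3:ℂ)^3*Complex.I^2 + (112)*T*(Real.sqrt 3:ℂ)^3*Complex.I + (-164)*T*(Real.sqrt 3:ℂ)^3 + (140)*T*(Real.sqrt 3:ℂ)^2*Complex.I^4 + (560)*T*(Real.sqrt 3:ℂ)^2*Complex.I^3 + (840)*T*(Real.sqrt 3:ℂ)^2*Complex.I^2 + (560)*T*(Real.sqrt 3:ℂ)^2*Complex.I + (-308)*T*(Real.sqrt 3:ℂ)^2 + (308)*T*(Real.sqrt 3:ℂ)*Complex.I^4 + (1232)*T*(Real.sqrt 3:ℂ)*Complex.I^3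 + (1848)*T*(Real.sqrt 3:ℂ)*Complex.I^2 + (1232)*T*(Real.sqrt 3:ℂ)*Complex.I + (-548)*T*(Real.sqrt 3:ℂ) + (532)*T*Complex.I^4 + (2128)*T*Complex.I^3 + (3192)*T*Complex.I^2 + (2128)*T*Complex.I + (-980)*T + (1)*(Real.sqrt 3:ℂ)^6 + (8)*(Real.sqrt 3:ℂ)^5 + (31)*(Real.sqrt 3:ℂ)^4 + (80)*(Real.sqrt 3:ℂ)^3 + (14)*(Real.sqrt 3:ℂ)^2*Complex.I^4 + (56)*(Real.sqrt 3:ℂ)^2*Complex.I^3 + (84)*(Real.sqrt 3:ℂ)^2*Complex.I^2 + (56)*(Real.sqrt 3:ℂ)^2*Complex.I + (177)*(Real.sqrt 3:ℂ)^2 + (56)*(Real.sqrt 3:ℂ)*Complex.I^4 + (224)*(Real.sqrt 3:ℂ)*Complex.I^3 + (336)*(Real.sqrt 3:ℂ)*Complex.I^2 + (224)*(Real.sqrt 3:ℂ)*Complex.I + (352)*(Real.sqrt 3:ℂ) + (126)*Complex.I^4 + (504)*Complex.I^3 + (756)*Complex.I^2 + (504)*Complex.I + (643)) * sq3C + ((7/2)*T^8*(Real.sqrt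 3:ℂ)*Complex.I^6 + (28)*T^8*(Real.sqrt 3:ℂ)*Complex.I^5 + (189/2)*T^8*(Real.sqrt 3:ℂ)*Complex.I^4 + (168)*T^8*(Real.sqrt 3:ℂ)*Complex.I^3 + (329/2)*T^8*(Real.sqrt 3:ℂ)*Complex.I^2 + (84)*T^8*(Real.sqrt 3:ℂ)*Complex.I + (35/2)*T^8*(Real.sqrt 3:ℂ) + (97/16)*T^8*Complex.I^6 + (97/2)*T^8*Complex.I^5 + (2619/16)*T^8*Complex.I^4 + (291)*T^8*Complex.I^3 + (4563/16)*T^8*Complex.I^2 + (293/2)*T^8*Complex.I + (505/16)*T^8 + (41/2)*T^7*(Real.sqrt 3:ℂ)*Complex.I^6 + (164)*T^7*(Real.sqrt 3:ℂ)*Complex.I^5 + (1107/2)*T^7*(Real.sqrt 3:ℂ)*Complex.I^4 + (984)*T^7*(Real.sqrt 3:ℂ)*Complex.I^3 + (1539/2)*T^7*(Real.sqrt 3:ℂ)*Complex.I^2 + (-284)*T^7*(Real.sqrt 3:ℂ)*Complex.I + (-1735/2)*T^7*(Real.sqrt 3:ℂ) + (71/2)*T^7*Complex.I^6 + (284)*T^7*Complex.I^5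 + (1917/2)*T^7*Complex.I^4 + (1704)*T^7*Complex.I^3 + (2661/2)*T^7*Complex.I^2 + (-500)*T^7*Complex.I + (-3025/2)*T^7 + (105/2)*T^6*(Real.sqrt 3:ℂ)*Complex.I^6 + (420)*T^6*(Real.sqrt 3:ℂ)*Complex.I^5 + (2835/2)*T^6*(Real.sqrt 3:ℂ)*Complex.I^4 + (2520)*T^6*(Real.sqrt 3:ℂ)*Complex.I^3 + (4963/2)*T^6*(Real.sqrt 3:ℂ)*Complex.I^2 + (1316)*T^6*(Real.sqrt 3:ℂ)*Complex.I + (665/2)*T^6*(Real.sqrt 3:ℂ) + (91)*T^6*Complex.I^6 + (728)*T^6*Complex.I^5 + (2457)*T^6*Complex.I^4 + (4368)*T^6*Complex.I^3 + (4305)*T^6*Complex.I^2 + (2296)*T^6*Complex.I + (595)*T^6 + (77)*T^5*(Real.sqrt 3:ℂ)*Complex.I^6 + (616)*T^5*(Real.sqrt 3:ℂ)*Complex.I^5 + (2079)*T^5*(Real.sqrt 3:ℂ)*Complex.I^4 + (3696)*T^5*(Real.sqrt 3:ℂ)*Complex.I^3 + (3535)*T^5*(Real.sqrt 3:ℂ)*Complex.I^2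 + (1512)*T^5*(Real.sqrt 3:ℂ)*Complex.I + (-35)*T^5*(Real.sqrt 3:ℂ) + (133)*T^5*Complex.I^6 + (1064)*T^5*Complex.I^5 + (3591)*T^5*Complex.I^4 + (6384)*T^5*Complex.I^3 + (6111)*T^5*Complex.I^2 + (2632)*T^5*Complex.I + (-35)*T^5 + (70)*T^4*(Real.sqrt 3:ℂ)*Complex.I^6 + (560)*T^4*(Real.sqrt 3:ℂ)*Complex.I^5 + (1890)*T^4*(Real.sqrt 3:ℂ)*Complex.I^4 + (3360)*T^4*(Real.sqrt 3:ℂ)*Complex.I^3 + (2226)*T^4*(Real.sqrt 3:ℂ)*Complex.I^2 + (-2576)*T^4*(Real.sqrt 3:ℂ)*Complex.I + (-4970)*T^4*(Real.sqrt 3:ℂ) + (245/2)*T^4*Complex.I^6 + (980)*T^4*Complex.I^5 + (6615/2)*T^4*Complex.I^4 + (5880)*T^4*Complex.I^3 + (7791/2)*T^4*Complex.I^2 + (-4508)*T^4*Complex.I + (-17395/2)*T^4 + (42)*T^3*(Real.sqrt 3:ℂ)*Complex.I^6 + (336)*T^3*(Real.sqrt 3:ℂ)*Complex.I^5 + (1134)*T^3*(Real.sqrt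 3:ℂ)*Complex.I^4 + (2016)*T^3*(Real.sqrt 3:ℂ)*Complex.I^3 + (1358)*T^3*(Real.sqrt 3:ℂ)*Complex.I^2 + (-1456)*T^3*(Real.sqrt 3:ℂ)*Complex.I + (-2870)*T^3*(Real.sqrt 3:ℂ) + (70)*T^3*Complex.I^6 + (560)*T^3*Complex.I^5 + (1890)*T^3*Complex.I^4 + (3360)*T^3*Complex.I^3 + (2226)*T^3*Complex.I^2 + (-2576)*T^3*Complex.I + (-4970)*T^3 + (14)*T^2*(Real.sqrt 3:ℂ)*Complex.I^6 + (112)*T^2*(Real.sqrt 3:ℂ)*Complex.I^5 + (378)*T^2*(Real.sqrt 3:ℂ)*Complex.I^4 + (672)*T^2*(Real.sqrt 3:ℂ)*Complex.I^3 + (1498)*T^2*(Real.sqrt 3:ℂ)*Complex.I^2 + (3696)*T^2*(Real.sqrt 3:ℂ)*Complex.I + (4270)*T^2*(Real.sqrt 3:ℂ) + (28)*T^2*Complex.I^6 + (224)*T^2*Complex.I^5 + (756)*T^2*Complex.I^4 + (1344)*T^2*Complex.I^3 + (2772)*T^2*Complex.I^2 + (6496)*T^2*Complex.I + (7420)*T^2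 + (4)*T*(Real.sqrt 3:ℂ)*Complex.I^6 + (32)*T*(Real.sqrt 3:ℂ)*Complex.I^5 + (108)*T*(Real.sqrt 3:ℂ)*Complex.I^4 + (192)*T*(Real.sqrt 3:ℂ)*Complex.I^3 + (1068)*T*(Real.sqrt 3:ℂ)*Complex.I^2 + (3616)*T*(Real.sqrt 3:ℂ)*Complex.I + (4420)*T*(Real.sqrt 3:ℂ) + (4)*T*Complex.I^6 + (32)*T*Complex.I^5 + (108)*T*Complex.I^4 + (192)*T*Complex.I^3 + (1740)*T*Complex.I^2 + (6304)*T*Complex.I + (7780)*T + (224)*(Real.sqrt 3:ℂ)*Complex.I^2 + (896)*(Real.sqrt 3:ℂ)*Complex.I + (1120)*(Real.sqrt 3:ℂ) + (1)*Complex.I^6 + (8)*Complex.I^5 + (27)*Complex.I^4 + (48)*Complex.I^3 + (435)*Complex.I^2 + (1576)*Complex.I + (1945)) * Complex.I_sq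

lemma E3lem : 192*(-2*(1+Complex.I)*(3*(Real.sqrt 3:ℂ)+5))^2*Kc^2
    = -((768*(Real.sqrt 3:ℂ)+1344)^2) := by
  rw [Kc]
  linear_combination ((6912)*(Real.sqrt 3:ℂ)^2*Complex.I^4 + (27648)*(Real.sqrt 3:ℂ)^2*Complex.I^3 + (41472)*(Real.sqrt 3:ℂ)^2*Complex.I^2 + (27648)*(Real.sqrt 3:ℂ)^2*Complex.I + (6912)*(Real.sqrt 3:ℂ)^2 + (64512)*(Real.sqrt 3:ℂ)*Complex.I^4 + (258048)*(Real.sqrt 3:ℂ)*Complex.I^3 + (387072)*(Real.sqrt 3:ℂ)*Complex.I^2 + (258048)*(Real.sqrt 3:ℂ)*Complex.I + (64512)*(Real.sqrt 3:ℂ) + (240384)*Complex.I^4 + (961536)*Complex.I^3 + (1442304)*Complex.I^2 + (961536)*Complex.I + (830208)) * sq3C + ((516096)*(Real.sqrt 3:ℂ)*Complex.I^2 + (2064384)*(Real.sqrt 3:ℂ)*Complex.I + (2580480)*(Real.sqrt 3:ℂ) + (893952)*Complex.I^2 + (3575808)*Complex.I + (4469760)) * Complex.I_sq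

lemma hasDerivAt_xM {T : ℂ} (hD : T - 1 - (Real.sqrt 3:ℂ) ≠ 0) :
    HasDerivAt xMoebius (Kc / (T - 1 - (Real.sqrt 3:ℂ))^2) T := by
  have h1 : HasDerivAt (fun y : ℂ => (1+Complex.I)/2*((1+(Real.sqrt 3:ℂ))*y+2))
      ((1+Complex.I)/2*(1+(Real.sqrt 3:ℂ))) T := by
    simpa using (((hasDerivAt_id T).const_mul (1+(Real.sqrt 3:ℂ))).add_const 2).const_mul
      ((1+Complex.I)/2)
  have h2 : HasDerivAt (fun y : ℂ => y - 1 - (Real.sqrt 3:ℂ)) 1 T := by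
    simpa using ((hasDerivAt_id T).sub_const 1).sub_const ((Real.sqrt 3:ℂ))
  have h3 := h1.div h2 hD
  have hfe : xMoebius = fun y : ℂ =>
      ((1+Complex.I)/2*((1+(Real.sqrt 3:ℂ))*y+2)) / (y - 1 - (Real.sqrt 3:ℂ)) := rfl
  rw [hfe]
  refine h3.congr_deriv ?_
  symm
  rw [div_eq_div_iff (pow_ne_zero 2 hD) (pow_ne_zero 2 hD), Kc]
  linear_combination ((1/2)*T^2*Complex.I + (1/2)*T^2 + (-1)*T*(Real.sqrt 3:ℂ)*Complex.I + (-1)*T*(Real.sqrt 3:ℂ) + (-1)*T*Complex.I + (-1)*T + (1/2)*(Real.sqrt 3:ℂ)^2*Complex.I + (1/2)*(Real.sqrt 3:ℂ)^2 + (1)*(Real.sqrt 3:ℂ)*Complex.I + (1)*(Real.sqrt 3:ℂ) + (1/2)*Complex.I + (1/2)) * sq3C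

lemma hasDerivAt_x1 {T : ℂ} (hD : T - 1 - (Real.sqrt 3:ℂ) ≠ 0) :
    HasDerivAt (fun y : ℂ => Kc / (y - 1 - (Real.sqrt 3:ℂ))^2)
      (-2*Kc / (T - 1 - (Real.sqrt 3:ℂ))^3) T := by
  have h2 : HasDerivAt (fun y : ℂ => (y - 1 - (Real.sqrt 3:ℂ))^2)
      ((2:ℕ)*(T - 1 - (Real.sqrt 3:ℂ))^1*1) T :=
    (((hasDerivAt_id T).sub_const 1).sub_const ((Real.sqrt 3:ℂ))).pow 2
  have h3 := (hasDerivAt_const T Kc).div h2 (pow_ne_zero 2 hD)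
  refine h3.congr_deriv ?_
  symm
  field_simp
  ring

lemma hasDerivAt_x2 {T : ℂ} (hD : T - 1 - (Real.sqrt 3:ℂ) ≠ 0) :
    HasDerivAt (fun y : ℂ => -2*Kc / (y - 1 - (Real.sqrt 3:ℂ))^3)
      (6*Kc / (T - 1 - (Real.sqrt 3:ℂ))^4) T := by
  have h2 : HasDerivAt (fun y : ℂ => (y - 1 - (Real.sqrt 3:ℂ))^3)
      ((3:ℕ)*(T - 1 - (Real.sqrt 3:ℂ))^2*1) T :=
    (((hasDerivAt_id T).sub_const 1).sub_const ((Real.sqrt 3:ℂ))).pow 3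
  have h3 := (hasDerivAt_const T (-2*Kc)).div h2 (pow_ne_zero 3 hD)
  refine h3.congr_deriv ?_
  symm
  field_simp
  ring

lemma combineQ (ν K μ r t u v d : ℂ) (hμ : μ ≠ 0) (ht : t ≠ 0) (hu : u ≠ 0) (hv : v ≠ 0)
    (hd : d ≠ 0) (hK : 192*ν^2*K^2 = -(μ^2)) :
    48*(ν*r/d^6)^2/(μ*(t*v*u)/d^8)^2*(K/d^2)^2 = -(1/4)*r^2/(t^2*u^2*v^2) := by
  have h1 : (μ*(t*v*u)/d^8)^2 ≠ 0 := by
    apply pow_ne_zero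
    exact div_ne_zero (mul_ne_zero hμ (mul_ne_zero (mul_ne_zero ht hv) hu)) (pow_ne_zero _ hd)
  rw [div_mul_eq_mul_div, div_eq_div_iff h1 (by
    exact mul_ne_zero (mul_ne_zero (pow_ne_zero _ ht) (pow_ne_zero _ hu)) (pow_ne_zero _ hv))]
  field_simp
  ring_nf
  linear_combination (r^2) * hK

lemma keyalg (Qa ψa pa gT g1 g2 x1 x2 x3 Qt : ℂ) (hg : gT ≠ 0)
    (r1 : gT^2 = x1) (r2 : 2*gT*g1 = x2) (r3 : 2*(g1*g1 + gT*g2) = x3)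
    (hsch : 2*x1*x3 = 3*x2^2) (hQ : Qa*x1^2 = Qt) :
    (((Qa*ψa*x1*x1 + pa*x2)*gT + pa*x1*g1 - (pa*x1*g1 + ψa*g2)) * gT^2
        - (pa*x1*gT - ψa*g1)*(2*gT^1*g1)) / (gT^2)^2 = Qt*(ψa/gT) := by
  subst x1 x2 x3 Qt
  have h4 : gT^2*(gT*g2) = gT^2*(2*g1^2) := by linear_combination hsch/4
  have h5 : gT*g2 = 2*g1^2 := mul_left_cancel₀ (pow_ne_zero 2 hg) h4
  field_simp
  ring_nf
  linear_combination (-ψa) * h5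

lemma div8lem (n d mp : ℂ) (hd : d ≠ 0) (h : n^8 + 14*n^4*d^4 + d^8 = mp) :
    (n/d)^8 + 14*(n/d)^4 + 1 = mp/d^8 := by
  field_simp
  linear_combination h

lemma div5lem (n d nr : ℂ) (hd : d ≠ 0) (h : (n^5 - n*d^4)*d = nr) :
    (n/d)^5 - n/d = nr/d^6 := by
  field_simp
  linear_combination h

theorem schwarz_hyperelliptic_equivalence
    (U V : Set ℂ) (hU : IsOpen U) (hV : IsOpen V)
    (hT1 : ∀ T ∈ U, T ≠ 1 + (Real.sqrt 3 : ℂ))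
    (hT2 : ∀ T ∈ U, T * (T ^ 3 - 1) * (T ^ 3 + 8) ≠ 0)
    (hx1 : ∀ T ∈ U, xMoebius T ^ 8 + 14 * xMoebius T ^ 4 + 1 ≠ 0)
    (hx0 : ∀ T ∈ U, xMoebius T ≠ 0)
    (hxV : ∀ T ∈ U, xMoebius T ∈ V)
    (ψ g : ℂ → ℂ)
    (hψ : SolvesOn (fun x => 48 * (x ^ 5 - x) ^ 2 / (x ^ 8 + 14 * x ^ 4 + 1) ^ 2) ψ V)
    (hg1 : ∀ T ∈ U, DifferentiableAt ℂ g T)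
    (hg2 : ∀ T ∈ U, DifferentiableAt ℂ (deriv g) T)
    (hgne : ∀ T ∈ U, g T ≠ 0)
    (hgsq : ∀ T ∈ U, g T ^ 2 = deriv xMoebius T) :
    SolvesOn (fun T => -(1 / 4) * (T ^ 6 - 20 * T ^ 3 - 8) ^ 2
        / (T ^ 2 * (T ^ 3 + 8) ^ 2 * (T ^ 3 - 1) ^ 2))
      (fun T => ψ (xMoebius T) / g T) U := by
  have hD : ∀ T ∈ U, T - 1 - (Real.sqrt 3:ℂ) ≠ 0 := by
    intro T hT h
    exact hT1 T hT (by linear_combination h)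
  have hxd : ∀ T ∈ U, HasDerivAt xMoebius (Kc / (T - 1 - (Real.sqrt 3:ℂ))^2) T :=
    fun T hT => hasDerivAt_xM (hD T hT)
  set Φ : ℂ → ℂ := fun T => ψ (xMoebius T) / g T with hΦdef
  set Φ₁ : ℂ → ℂ := fun T =>
    (deriv ψ (xMoebius T) * (Kc / (T - 1 - (Real.sqrt 3:ℂ))^2) * g T
      - ψ (xMoebius T) * deriv g T) / g T ^ 2 with hΦ₁def
  have hΦd : ∀ T ∈ U, HasDerivAt Φ (Φ₁ T) T := by
    intro T hT
    exact (((hψ.1 _ (hxV T hT)).hasDerivAt).comp T (hxd T hT)).div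
      ((hg1 T hT).hasDerivAt) (hgne T hT)
  have hev : ∀ T ∈ U, deriv Φ =ᶠ[nhds T] Φ₁ := by
    intro T hT
    filter_upwards [hU.mem_nhds hT] with y hy
    exact (hΦd y hy).deriv
  -- second derivative data
  have hΦ₁d : ∀ T ∈ U, HasDerivAt Φ₁
      ((((48 * (xMoebius T ^ 5 - xMoebius T) ^ 2 / (xMoebius T ^ 8 + 14 * xMoebius T ^ 4 + 1) ^ 2 * ψ (xMoebius T) * (Kc / (T - 1 - (Real.sqrt 3:ℂ))^2) * (Kc / (T - 1 - (Real.sqrt 3:ℂ))^2) + deriv ψ (xMoebius T) * (-2*Kc / (T - 1 - (Real.sqrt 3:ℂ))^3)) * g T + deriv ψ (xMoebius T) * (Kc / (T - 1 - (Real.sqrt 3:ℂ))^2) * deriv g T - (deriv ψ (xMoebius T) * (Kc / (T - 1 - (Real.sqrt 3:ℂ))^2) * deriv g T + ψ (xMoebius T) * deriv (deriv g) T)) * g T ^ 2 - (deriv ψ (xMoebius T) * (Kc / (T - 1 - (Real.sqrt 3:ℂ))^2) * g T - ψ (xMoebius T) * deriv g T) * ((2:ℕ) * g T ^ 1 * deriv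 g T)) / (g T ^ 2) ^ 2) T := by
    intro T hT
    have hD' := hD T hT
    have h0 : HasDerivAt (deriv ψ) (deriv (deriv ψ) (xMoebius T)) (xMoebius T) :=
      (hψ.2.1 _ (hxV T hT)).hasDerivAt
    have hQa : deriv (deriv ψ) (xMoebius T)
        = 48 * (xMoebius T ^ 5 - xMoebius T) ^ 2 / (xMoebius T ^ 8 + 14 * xMoebius T ^ 4 + 1) ^ 2
          * ψ (xMoebius T) := by
      simpa using hψ.2.2 _ (hxV T hT)
    rw [hQa] at h0
    have h_pa := h0.comp T (hxd T hT)
    have h_ψx := ((hψ.1 _ (hxV T hT)).hasDerivAt).comp T (hxd T hT)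
    have h_g := (hg1 T hT).hasDerivAt
    have h_dg := (hg2 T hT).hasDerivAt
    exact (((h_pa.mul (hasDerivAt_x1 hD')).mul h_g).sub (h_ψx.mul h_dg)).div (h_g.pow 2)
      (pow_ne_zero 2 (hgne T hT))
  refine ⟨fun T hT => (hΦd T hT).differentiableAt, ?_, ?_⟩
  · intro T hT
    exact ((hΦ₁d T hT).differentiableAt).congr_of_eventuallyEq (hev T hT)
  · intro T hT
    have hD' := hD T hT
    have h_g := (hg1 T hT).hasDerivAt
    have h_dg := (hg2 T hT).hasDerivAt
    -- algebraic relations for g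
    have r1 : g T ^ 2 = Kc / (T - 1 - (Real.sqrt 3:ℂ))^2 := (hgsq T hT).trans (hxd T hT).deriv
    have r2all : ∀ y ∈ U, 2 * g y * deriv g y = -2*Kc / (y - 1 - (Real.sqrt 3:ℂ))^3 := by
      intro y hy
      have heq : (fun z => g z ^ 2) =ᶠ[nhds y]
          (fun z => Kc / (z - 1 - (Real.sqrt 3:ℂ))^2) := by
        filter_upwards [hU.mem_nhds hy] with z hz
        exact (hgsq z hz).trans (hxd z hz).deriv
      have h1 := (((hg1 y hy).hasDerivAt).pow 2).congr_of_eventuallyEq heq.symm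
      have h2 := h1.unique (hasDerivAt_x1 (hD y hy))
      rw [← h2]
      push_cast
      ring
    have r3 : 2 * (deriv g T * deriv g T + g T * deriv (deriv g) T)
        = 6*Kc / (T - 1 - (Real.sqrt 3:ℂ))^4 := by
      have heq : (fun z => 2 * (g z * deriv g z)) =ᶠ[nhds T]
          (fun z => -2*Kc / (z - 1 - (Real.sqrt 3:ℂ))^3) := by
        filter_upwards [hU.mem_nhds hT] with z hz
        linear_combination r2all z hz
      have h1 := ((h_g.mul h_dg).const_mul 2).congr_of_eventuallyEq heq.symm
      have h2 := h1.unique (hasDerivAt_x2 hD')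
      linear_combination h2
    have r2 := r2all T hT
    have hsch : 2*(Kc / (T - 1 - (Real.sqrt 3:ℂ))^2)*(6*Kc / (T - 1 - (Real.sqrt 3:ℂ))^4)
        = 3*(-2*Kc / (T - 1 - (Real.sqrt 3:ℂ))^3)^2 := by
      field_simp
      ring
    -- the hypergeometric coefficient identity
    have h := hT2 T hT
    have hT0 : T ≠ 0 := fun h0 => h (by rw [h0]; ring)
    have hvne : T^3 - 1 ≠ 0 := fun h0 => h (by rw [h0]; ring)
    have hune : T^3 + 8 ≠ 0 := fun h0 => h (by rw [h0]; ring)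
    have ha : xMoebius T = (1+Complex.I)/2*((1+(Real.sqrt 3:ℂ))*T+2) / (T-1-(Real.sqrt 3:ℂ)) :=
      rfl
    have h5v : xMoebius T^5 - xMoebius T
        = (-2*(1+Complex.I)*(3*(Real.sqrt 3:ℂ)+5))*(T^6-20*T^3-8)
          / (T-1-(Real.sqrt 3:ℂ))^6 := by
      rw [ha]
      exact div5lem _ _ _ hD' (E1lem T)
    have h8v : xMoebius T^8 + 14*xMoebius T^4 + 1
        = (768*(Real.sqrt 3:ℂ)+1344)*(T*(T^3-1)*(T^3+8)) / (T-1-(Real.sqrt 3:ℂ))^8 := by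
      rw [ha]
      exact div8lem _ _ _ hD' (E2lem T)
    have hμ : (768*(Real.sqrt 3:ℂ)+1344) ≠ 0 := by
      have hcast : (768*(Real.sqrt 3:ℂ)+1344) = ((768*Real.sqrt 3+1344 : ℝ) : ℂ) := by
        push_cast
        ring
      rw [hcast]
      rw [Complex.ofReal_ne_zero]
      positivity
    have hQid : 48 * (xMoebius T^5 - xMoebius T)^2
          / (xMoebius T^8 + 14*xMoebius T^4 + 1)^2 * (Kc/(T - 1 - (Real.sqrt 3:ℂ))^2)^2
        = -(1/4)*(T^6-20*T^3-8)^2/(T^2*(T^3+8)^2*(T^3-1)^2) := by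
      rw [h5v, h8v]
      exact combineQ _ _ _ _ _ _ _ _ hμ hT0 hune hvne hD' E3lem
    have hder : deriv (deriv Φ) T = deriv Φ₁ T := (hev T hT).deriv_eq
    rw [hder, (hΦ₁d T hT).deriv]
    exact keyalg _ _ _ _ _ _ _ _ _ _ (hgne T hT) r1 r2 r3 hsch hQid
end

section
/- The lemniscatic period Π := (1/4)·∫₀¹ s^{−3/4}·(1−s)^{−1/2} ds (a convergent improper real integral) satisfies Π = √(π³/8) / Γ(3/4)², where Γ is the real Gamma function. -/
open Real

lemma lem_beta : (∫ s in (0:ℝ)..1, s ^ (-(3 / 4 : ℝ)) * (1 - s) ^ (-(1 / 2 : ℝ)))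
    = Real.Gamma (1/4) * Real.Gamma (1/2) / Real.Gamma (3/4) := by
  have hG : Complex.Gamma (3/4) ≠ 0 := by
    rw [(by norm_num : ((3:ℂ)/4) = ((3/4 : ℝ) : ℂ)), Complex.Gamma_ofReal]
    exact_mod_cast (Real.Gamma_pos_of_pos (by norm_num)).ne'
  have key : Complex.Gamma (1/4) * Complex.Gamma (1/2)
      = Complex.Gamma (3/4) * Complex.betaIntegral (1/4) (1/2) := by
    have := Complex.Gamma_mul_Gamma_eq_betaIntegral
      (s := 1/4) (t := 1/2) (by norm_num) (by norm_num)
    norm_num at this ⊢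
    convert this using 3 <;> norm_num
  have hb : Complex.betaIntegral (1/4) (1/2)
      = ((∫ s in (0:ℝ)..1, s ^ (-(3 / 4 : ℝ)) * (1 - s) ^ (-(1 / 2 : ℝ)) : ℝ) : ℂ) := by
    rw [Complex.betaIntegral, ← intervalIntegral.integral_ofReal]
    refine intervalIntegral.integral_congr fun x hx => ?_
    rw [Set.uIcc_of_le (by norm_num : (0:ℝ) ≤ 1)] at hx
    push_cast
    rw [Complex.ofReal_cpow hx.1, Complex.ofReal_cpow (by linarith [hx.2] : (0:ℝ) ≤ 1 - x)]
    norm_num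
  apply Complex.ofReal_injective
  rw [← hb]
  push_cast [← Complex.Gamma_ofReal]
  field_simp
  rw [mul_comm, ← key]

theorem lemniscatic_period_eval :
    (1 / 4 : ℝ) * ∫ s in (0:ℝ)..1, s ^ (-(3 / 4 : ℝ)) * (1 - s) ^ (-(1 / 2 : ℝ)) =
      Real.sqrt (Real.pi ^ 3 / 8) / Real.Gamma (3 / 4) ^ 2 := by
  have hG : (0:ℝ) < Real.Gamma (3/4) := Real.Gamma_pos_of_pos (by norm_num)
  have hs2 : Real.sqrt 2 ^ 2 = 2 := Real.sq_sqrt (by norm_num)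
  have hsp : Real.sqrt Real.pi ^ 2 = Real.pi := Real.sq_sqrt Real.pi_pos.le
  have hrefl : Real.Gamma (1/4) * Real.Gamma (3/4) = Real.pi * Real.sqrt 2 := by
    have h := Real.Gamma_mul_Gamma_one_sub (1/4)
    rw [show (1:ℝ) - 1/4 = 3/4 by norm_num,
        show Real.pi * (1/4) = Real.pi / 4 by ring, Real.sin_pi_div_four] at h
    rw [h]
    rw [div_eq_iff (by positivity)]
    nlinarith [hs2]
  have hsqrt : Real.sqrt (Real.pi ^ 3 / 8)
      = Real.pi * Real.sqrt Real.pi * Real.sqrt 2 / 4 := by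
    have h2 : (Real.pi * Real.sqrt Real.pi * Real.sqrt 2 / 4)^2 = Real.pi ^ 3 / 8 := by
      rw [div_pow, mul_pow, mul_pow, hs2, hsp]; ring
    rw [← h2, Real.sqrt_sq (by positivity)]
  rw [lem_beta, Real.Gamma_one_half_eq, hsqrt]
  field_simp
  linear_combination hrefl
end
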